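/- Let Γ be a finite connected graph with Cheeger constant h(Γ) ≥ h > 0, let B ⊆ V(Γ) be a set of vertices, and for a vertex v ∉ B and radius ρ let B'_ρ(v) denote the set of vertices reachable from v by a path of length less than ρ avoiding all vertices of B. Suppose |B| ≤ (h/2)·|B'_{ρ₀}(v)| for some ρ₀. Then for every integer i ≥ 0, as long as |B'_{ρ₀+i-1}(v)| ≤ |V(Γ)|/2, one has |B'_{ρ₀+i}(v)| ≥ (1 + h/2)^i · |B'_{ρ₀}(v)|. -/

import Mathlib

/-- Outer vertex boundary of a set `A` in a graph `Γ`. -/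
def vbdry {V : Type} (Γ : SimpleGraph V) (A : Set V) : Set V :=
  {v | v ∉ A ∧ ∃ a ∈ A, Γ.Adj v a}

/-- `Γ` has Cheeger constant at least `h`. -/
def CheegerGE {V : Type} (Γ : SimpleGraph V) (h : ℝ) : Prop :=
  ∀ A : Set V, h * min A.ncard Aᶜ.ncard ≤ ((vbdry Γ A).ncard : ℝ)

/-- `B'_ρ(v)`: vertices reachable from `v` by a path of length `< ρ` avoiding `B`. -/
def reachAvoid {V : Type} (Γ : SimpleGraph V) (B : Set V) (v : V) (ρ : ℕ) : Set V :=
  {u | ∃ w : Γ.Walk v u, w.length < ρ ∧ ∀ x ∈ w.support, x ∉ B}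

lemma reachAvoid_mono {V : Type} (Γ : SimpleGraph V) (B : Set V) (v : V)
    {ρ ρ' : ℕ} (hρ : ρ ≤ ρ') : reachAvoid Γ B v ρ ⊆ reachAvoid Γ B v ρ' := by
  rintro u ⟨w, hw, hs⟩
  exact ⟨w, hw.trans_le hρ, hs⟩

lemma step_lemma {V : Type} [Fintype V] (Γ : SimpleGraph V) (h : ℝ) (hh : 0 < h)
    (hch : CheegerGE Γ h) (B : Set V) (v : V) (ρ : ℕ)
    (hle : 2 * (reachAvoid Γ B v ρ).ncard ≤ Fintype.card V)
    (hB : (B.ncard : ℝ) ≤ h / 2 * ((reachAvoid Γ B v ρ).ncard : ℝ)) :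
    (1 + h / 2) * ((reachAvoid Γ B v ρ).ncard : ℝ) ≤
      ((reachAvoid Γ B v (ρ + 1)).ncard : ℝ) := by
  set A := reachAvoid Γ B v ρ with hA
  have hsub : A ∪ (vbdry Γ A \ B) ⊆ reachAvoid Γ B v (ρ + 1) := by
    rintro x (hx | ⟨⟨hxA, a, haA, hadj⟩, hxB⟩)
    · exact reachAvoid_mono Γ B v (Nat.le_succ ρ) hx
    · obtain ⟨w, hw, hs⟩ := haA
      refine ⟨w.concat hadj.symm, ?_, ?_⟩
      · rw [SimpleGraph.Walk.length_concat]; omega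
      · intro y hy
        rw [SimpleGraph.Walk.support_concat, List.mem_append,
          List.mem_singleton] at hy
        rcases hy with hy | hy
        · exact hs y hy
        · subst hy; exact hxB
  have hdisj : Disjoint A (vbdry Γ A \ B) := by
    rw [Set.disjoint_left]
    rintro x hx ⟨⟨hx', _⟩, _⟩
    exact hx' hx
  have hcard : A.ncard + (vbdry Γ A \ B).ncard ≤ (reachAvoid Γ B v (ρ + 1)).ncard := by
    rw [← Set.ncard_union_eq hdisj (Set.toFinite _) (Set.toFinite _)]
    exact Set.ncard_le_ncard hsub (Set.toFinite _)
  have hdiff : (vbdry Γ A).ncard ≤ (vbdry Γ A \ B).ncard + B.ncard := by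
    calc (vbdry Γ A).ncard ≤ ((vbdry Γ A \ B) ∪ B).ncard :=
          Set.ncard_le_ncard (fun x hx => by
            by_cases hxB : x ∈ B
            · exact Or.inr hxB
            · exact Or.inl ⟨hx, hxB⟩) (Set.toFinite _)
      _ ≤ _ := Set.ncard_union_le _ _
  have hcompl : A.ncard + Aᶜ.ncard = Fintype.card V := by
    rw [← Nat.card_eq_fintype_card]
    exact Set.ncard_add_ncard_compl A
  have hmin : min A.ncard Aᶜ.ncard = A.ncard := min_eq_left (by omega)
  have hcheeg : h * (A.ncard : ℝ) ≤ ((vbdry Γ A).ncard : ℝ) := by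
    have := hch A
    rw [hmin] at this
    exact_mod_cast this
  have hcardR : (A.ncard : ℝ) + ((vbdry Γ A \ B).ncard : ℝ) ≤
      ((reachAvoid Γ B v (ρ + 1)).ncard : ℝ) := by exact_mod_cast hcard
  have hdiffR : ((vbdry Γ A).ncard : ℝ) ≤ ((vbdry Γ A \ B).ncard : ℝ) + (B.ncard : ℝ) := by
    exact_mod_cast hdiff
  linarith

/-- In a finite connected graph with Cheeger constant `≥ h`, a set
`B` of vertices with `|B| ≤ (h/2)|B'_{ρ₀}(v)|`, `v ∉ B`: for every `i ≥ 0`, as long as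
`|B'_{ρ₀+i}(v)| ≤ |V|/2`, one has `|B'_{ρ₀+i+1}(v)| ≥ (1+h/2)^{i+1} |B'_{ρ₀}(v)|`. -/
theorem stmt_8 {V : Type} [Fintype V] (Γ : SimpleGraph V) (h : ℝ) (hh : 0 < h)
    (hΓconn : Γ.Connected) (hch : CheegerGE Γ h)
    (B : Set V) (v : V) (hv : v ∉ B) (ρ₀ : ℕ)
    (hB : (B.ncard : ℝ) ≤ h / 2 * ((reachAvoid Γ B v ρ₀).ncard : ℝ)) :
    ∀ i : ℕ, 2 * (reachAvoid Γ B v (ρ₀ + i)).ncard ≤ Fintype.card V →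
      (1 + h / 2) ^ (i + 1) * ((reachAvoid Γ B v ρ₀).ncard : ℝ) ≤
        ((reachAvoid Γ B v (ρ₀ + i + 1)).ncard : ℝ) := by
  have hBgen : ∀ ρ, ρ₀ ≤ ρ → (B.ncard : ℝ) ≤ h / 2 * ((reachAvoid Γ B v ρ).ncard : ℝ) := by
    intro ρ hρ
    refine hB.trans (mul_le_mul_of_nonneg_left ?_ (by linarith))
    exact_mod_cast Set.ncard_le_ncard (reachAvoid_mono Γ B v hρ) (Set.toFinite _)
  intro i
  induction i with
  | zero =>
    intro hle
    simpa using step_lemma Γ h hh hch B v ρ₀ (by simpa using hle) hB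
  | succ n ih =>
    intro hle
    have hle' : 2 * (reachAvoid Γ B v (ρ₀ + n)).ncard ≤ Fintype.card V := by
      have := Set.ncard_le_ncard (reachAvoid_mono Γ B v (by omega : ρ₀ + n ≤ ρ₀ + (n + 1)))
        (Set.toFinite (reachAvoid Γ B v (ρ₀ + (n + 1))))
      omega
    have h1 := ih hle'
    have h2 := step_lemma Γ h hh hch B v (ρ₀ + n + 1) hle (hBgen _ (by omega))
    have hpos : (0 : ℝ) < 1 + h / 2 := by linarith
    have h3 : (1 + h / 2) ^ (n + 1 + 1) * ((reachAvoid Γ B v ρ₀).ncard : ℝ) ≤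
        (1 + h / 2) * ((reachAvoid Γ B v (ρ₀ + n + 1)).ncard : ℝ) := by
      rw [pow_succ, mul_comm ((1 + h / 2) ^ (n + 1)) (1 + h / 2), mul_assoc]
      exact mul_le_mul_of_nonneg_left h1 (le_of_lt hpos)
    exact h3.trans h2
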